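/- Consider the classical Lorenz system with parameters s = 10, r = 28, b = 8/3, i.e. ẋ₁ = 10(x₂−x₁), ẋ₂ = 28x₁ − x₂ − x₁x₃, ẋ₃ = x₁x₂ − (8/3)x₃. Let x : ℝ → ℝ³ be a differentiable solution of this system. If x₁(0)² + x₂(0)² + (x₃(0)−38)² ≤ (152/√15)² = 23104/15, then x₁(t)² + x₂(t)² + (x₃(t)−38)² ≤ 23104/15 for all t ≥ 0; that is, the closed ball of radius 152/√15 around (0, 0, 38) is positively invariant. -/

import Mathlib

/-- For the classical Lorenz system (`s = 10`, `r = 28`, `b = 8/3`), the closed ball of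
radius `152/√15` around `(0, 0, 38)` is positively invariant. -/
theorem lorenz_classical_ball_invariant
    (x₁ x₂ x₃ : ℝ → ℝ)
    (h₁ : Differentiable ℝ x₁) (h₂ : Differentiable ℝ x₂) (h₃ : Differentiable ℝ x₃)
    (ode₁ : ∀ t : ℝ, deriv x₁ t = 10 * (x₂ t - x₁ t))
    (ode₂ : ∀ t : ℝ, deriv x₂ t = 28 * x₁ t - x₂ t - x₁ t * x₃ t)
    (ode₃ : ∀ t : ℝ, deriv x₃ t = x₁ t * x₂ t - (8 / 3) * x₃ t)
    (h0 : x₁ 0 ^ 2 + x₂ 0 ^ 2 + (x₃ 0 - 38) ^ 2 ≤ 23104 / 15) :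
    ∀ t : ℝ, 0 ≤ t → x₁ t ^ 2 + x₂ t ^ 2 + (x₃ t - 38) ^ 2 ≤ 23104 / 15 := by
  set g : ℝ → ℝ := fun t =>
    (x₁ t ^ 2 + x₂ t ^ 2 + (x₃ t - 38) ^ 2 - 23104 / 15) * Real.exp (2 * t) with hg
  have hDer : ∀ t : ℝ, HasDerivAt g
      ((2 * x₁ t * (10 * (x₂ t - x₁ t)) + 2 * x₂ t * (28 * x₁ t - x₂ t - x₁ t * x₃ t)
          + 2 * (x₃ t - 38) * (x₁ t * x₂ t - (8 / 3) * x₃ t)) * Real.exp (2 * t)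
        + (x₁ t ^ 2 + x₂ t ^ 2 + (x₃ t - 38) ^ 2 - 23104 / 15) * (2 * Real.exp (2 * t))) t := by
    intro t
    have d1 : HasDerivAt x₁ (10 * (x₂ t - x₁ t)) t := by
      rw [← ode₁ t]; exact (h₁ t).hasDerivAt
    have d2 : HasDerivAt x₂ (28 * x₁ t - x₂ t - x₁ t * x₃ t) t := by
      rw [← ode₂ t]; exact (h₂ t).hasDerivAt
    have d3 : HasDerivAt x₃ (x₁ t * x₂ t - (8 / 3) * x₃ t) t := by
      rw [← ode₃ t]; exact (h₃ t).hasDerivAt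
    have dV : HasDerivAt (fun t => x₁ t ^ 2 + x₂ t ^ 2 + (x₃ t - 38) ^ 2 - 23104 / 15)
        (2 * x₁ t * (10 * (x₂ t - x₁ t)) + 2 * x₂ t * (28 * x₁ t - x₂ t - x₁ t * x₃ t)
          + 2 * (x₃ t - 38) * (x₁ t * x₂ t - (8 / 3) * x₃ t)) t := by
      have e1 := d1.pow 2
      have e2 := d2.pow 2
      have e3 := (d3.sub_const 38).pow 2
      have := ((e1.add e2).add e3).sub_const (23104 / 15 : ℝ)
      exact this.congr_deriv (by push_cast; ring)
    have dE : HasDerivAt (fun t : ℝ => Real.exp (2 * t)) (2 * Real.exp (2 * t)) t := by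
      simpa [mul_comm] using ((hasDerivAt_id t).const_mul 2).exp
    exact dV.mul dE
  have hDerNonpos : ∀ t : ℝ, deriv g t ≤ 0 := by
    intro t
    rw [(hDer t).deriv]
    have hexp : (0:ℝ) < Real.exp (2 * t) := Real.exp_pos _
    have key : (2 * x₁ t * (10 * (x₂ t - x₁ t)) + 2 * x₂ t * (28 * x₁ t - x₂ t - x₁ t * x₃ t)
          + 2 * (x₃ t - 38) * (x₁ t * x₂ t - (8 / 3) * x₃ t))
        + (x₁ t ^ 2 + x₂ t ^ 2 + (x₃ t - 38) ^ 2 - 23104 / 15) * 2 ≤ 0 := by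
      nlinarith [sq_nonneg (x₁ t), sq_nonneg (x₃ t - 38 / 5)]
    nlinarith [key, hexp]
  have hAnti : Antitone g :=
    antitone_of_deriv_nonpos (fun t => ((hDer t).differentiableAt)) hDerNonpos
  intro t ht
  have := hAnti ht
  have hg0 : g 0 ≤ 0 := by
    simp only [hg, mul_zero, Real.exp_zero, mul_one]
    linarith
  have hgt : g t ≤ 0 := le_trans this hg0
  have hexp : (0:ℝ) < Real.exp (2 * t) := Real.exp_pos _
  simp only [hg] at hgt
  by_contra h
  push_neg at h
  have hpos : (0:ℝ) < (x₁ t ^ 2 + x₂ t ^ 2 + (x₃ t - 38) ^ 2 - 23104 / 15) * Real.exp (2 * t) :=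
    mul_pos (by linarith) hexp
  linarith
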